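/- arXiv:2207.12989 — 6 statements merged into one kernel-verified Lean document; each statement's English description precedes it below -/
import Mathlib

section
/- For every positive integer r there is a constant C = C(r) > 0 such that for every prime p, every complex number z with |z| ≤ 1, and all complex numbers s, w, α₁,…,α_r with Re(s+α_j) ≥ 1/2 for every j and Re(w) ≥ 1/2, one has |(2/π)∫₀^π ∏_{j=1}^r (1 − 2p^{−(s+α_j)} cos θ + p^{−2(s+α_j)})⁻¹ · (1 − 2z p^{−w} cos θ + z²p^{−2w})⁻¹ · sin²θ dθ − 1 − ∑_{i=1}^{r} z·p^{−(s+w+α_i)} − ∑_{1≤i<j≤r} p^{−(2s+α_i+α_j)} − ∑_{1≤i≤j≤r} z²·p^{−(2s+2w+α_i+α_j)}| ≤ C·p^{−3/2}. -/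
set_option maxHeartbeats 1000000
set_option linter.unnecessarySimpa false
open Finset Complex Real intervalIntegral
theorem pair_sum {n : ℕ} (f : Fin n → ℂ) :
    ∑ i, ∑ j ∈ Finset.Ioi i, f i * f j = ((∑ i, f i)^2 - ∑ i, (f i)^2)/2 := by
  have swap : ∑ i, ∑ j ∈ Finset.Ioi i, f i * f j
      = ∑ i, ∑ j ∈ Finset.Iio i, f i * f j := by
    rw [Finset.sum_sigma', Finset.sum_sigma']
    apply Finset.sum_nbij' (fun x => ⟨x.2, x.1⟩) (fun x => ⟨x.2, x.1⟩) <;>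
      simp [Finset.mem_sigma, mul_comm]
  have expand : (∑ i, f i)^2 = ∑ i, ∑ j, f i * f j := by
    rw [sq, Finset.sum_mul_sum]
  have disj : ∀ i : Fin n, Disjoint (Finset.Iio i) (Finset.Ici i) := by
    intro i
    rw [Finset.disjoint_left]; intro a ha hb
    simp only [Finset.mem_Iio, Finset.mem_Ici] at *
    exact absurd hb (not_le.2 ha)
  have split : ∀ i : Fin n, ∑ j, f i * f j
      = (∑ j ∈ Finset.Iio i, f i * f j) + (f i * f i + ∑ j ∈ Finset.Ioi i, f i * f j) := by
    intro i
    have h1 : (Finset.univ : Finset (Fin n)) = Finset.Iio i ∪ Finset.Ici i := by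
      ext j; simp [lt_or_ge j i]
    rw [h1, Finset.sum_union (disj i), Finset.Ici_eq_cons_Ioi, Finset.sum_cons]
  have key : (∑ i, f i)^2 = (∑ i, ∑ j ∈ Finset.Iio i, f i * f j)
      + ((∑ i, f i * f i) + ∑ i, ∑ j ∈ Finset.Ioi i, f i * f j) := by
    rw [expand, ← Finset.sum_add_distrib, ← Finset.sum_add_distrib]
    exact Finset.sum_congr rfl fun i _ => split i
  rw [← swap] at key
  have : ∑ i, f i * f i = ∑ i, (f i)^2 := by simp [sq]
  rw [this] at key
  linear_combination -key / 2

theorem factor_decomp (X : ℂ) (θ : ℝ) :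
    1 - 2*X*(Real.cos θ : ℂ) + X^2
      = (1 - X * Complex.exp (θ*Complex.I)) * (1 - X * Complex.exp (-(θ*Complex.I))) := by
  have h1 : Complex.exp (θ*Complex.I) * Complex.exp (-(θ*Complex.I)) = 1 := by
    rw [← Complex.exp_add]; simp
  have h2 : Complex.exp (θ*Complex.I) + Complex.exp (-(θ*Complex.I)) = 2 * (Real.cos θ : ℂ) := by
    rw [Complex.ofReal_cos, Complex.cos]
    ring_nf
  calc 1 - 2*X*(Real.cos θ : ℂ) + X^2
      = 1 - X * (2*(Real.cos θ : ℂ)) + X^2 * (1:ℂ) := by ring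
    _ = 1 - X * (Complex.exp (θ*Complex.I) + Complex.exp (-(θ*Complex.I)))
        + X^2 * (Complex.exp (θ*Complex.I) * Complex.exp (-(θ*Complex.I))) := by rw [h1, h2]
    _ = _ := by ring

theorem factor_lb (X : ℂ) (hX1 : ‖X‖ ≤ 1) (θ : ℝ) :
    (1 - ‖X‖) * (1 - ‖X‖) ≤ ‖1 - 2*X*(Real.cos θ : ℂ) + X^2‖ := by
  have he1 : ‖Complex.exp (θ*Complex.I)‖ = 1 := by
    simpa using Complex.norm_exp_ofReal_mul_I θ
  have he2 : ‖Complex.exp (-(θ*Complex.I))‖ = 1 := by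
    have : -(↑θ*Complex.I) = ((-θ : ℝ) : ℂ) * Complex.I := by push_cast; ring
    rw [this]; simpa using Complex.norm_exp_ofReal_mul_I (-θ)
  have k1 : 1 - ‖X‖ ≤ ‖1 - X * Complex.exp (θ*Complex.I)‖ := by
    have := norm_sub_norm_le (1 : ℂ) (X*Complex.exp (θ*Complex.I))
    simpa [norm_mul, he1] using this
  have k2 : 1 - ‖X‖ ≤ ‖1 - X * Complex.exp (-(θ*Complex.I))‖ := by
    have := norm_sub_norm_le (1 : ℂ) (X*Complex.exp (-(θ*Complex.I)))
    simpa [norm_mul, he2] using this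
  rw [factor_decomp, norm_mul]
  exact mul_le_mul k1 k2 (by linarith) (norm_nonneg _)

theorem factor_ne (X : ℂ) (hX : ‖X‖ < 1) (θ : ℝ) :
    1 - 2*X*(Real.cos θ : ℂ) + X^2 ≠ 0 := by
  intro h
  have := factor_lb X hX.le θ
  rw [h, norm_zero] at this
  nlinarith

theorem factor_inv_bound (X : ℂ) (hX : ‖X‖ ≤ 3/4) (θ : ℝ) :
    ‖(1 - 2*X*(Real.cos θ : ℂ) + X^2)⁻¹‖ ≤ 16 := by
  have hlb := factor_lb X (by linarith) θ
  have h16 : (1/16 : ℝ) ≤ (1 - ‖X‖) * (1 - ‖X‖) := by nlinarith [norm_nonneg X]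
  rw [norm_inv]
  have hpos : (0:ℝ) < ‖1 - 2*X*(Real.cos θ : ℂ) + X^2‖ := by linarith
  rw [inv_le_comm₀ hpos (by norm_num)]
  linarith

theorem factor_err (X : ℂ) (hX : ‖X‖ ≤ 3/4) (θ : ℝ) :
    ‖(1 - 2*X*(Real.cos θ : ℂ) + X^2)⁻¹
      - (1 + 2*X*(Real.cos θ : ℂ) + X^2*(4*(Real.cos θ : ℂ)^2 - 1))‖ ≤ 450*‖X‖^3 := by
  set cc : ℂ := (Real.cos θ : ℂ) with hcc
  have hc : ‖cc‖ ≤ 1 := by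
    rw [hcc, Complex.norm_real]
    exact Real.abs_cos_le_one θ
  have hD : 1 - 2*X*cc + X^2 ≠ 0 := factor_ne X (by linarith) θ
  have key : (1 - 2*X*cc + X^2)⁻¹ - (1 + 2*X*cc + X^2*(4*cc^2 - 1))
      = (-(4*X^3*cc) + X^4) + (2*X*cc - X^2)^3 * (1 - 2*X*cc + X^2)⁻¹ := by
    field_simp
    ring
  rw [key]
  have hq : ‖2*X*cc - X^2‖ ≤ 3*‖X‖ := by
    calc ‖2*X*cc - X^2‖ ≤ ‖2*X*cc‖ + ‖X^2‖ := norm_sub_le _ _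
      _ = 2*‖X‖*‖cc‖ + ‖X‖^2 := by rw [norm_mul, norm_mul, norm_pow]; simp
      _ ≤ 3*‖X‖ := by nlinarith [norm_nonneg X]
  have hinv := factor_inv_bound X hX θ
  have hX0 := norm_nonneg X
  calc ‖(-(4*X^3*cc) + X^4) + (2*X*cc - X^2)^3 * (1 - 2*X*cc + X^2)⁻¹‖
      ≤ ‖-(4*X^3*cc) + X^4‖ + ‖(2*X*cc - X^2)^3‖ * ‖(1 - 2*X*cc + X^2)⁻¹‖ := by
        refine (norm_add_le _ _).trans ?_
        rw [norm_mul]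
    _ ≤ (4*‖X‖^3*‖cc‖ + ‖X‖^4) + (3*‖X‖)^3 * 16 := by
        have h1 : ‖-(4*X^3*cc) + X^4‖ ≤ 4*‖X‖^3*‖cc‖ + ‖X‖^4 := by
          refine (norm_add_le _ _).trans ?_
          rw [norm_neg, norm_mul, norm_mul, norm_pow, norm_pow]
          have : ‖(4:ℂ)‖ = 4 := by norm_num
          rw [this]
        have h2 : ‖(2*X*cc - X^2)^3‖ ≤ (3*‖X‖)^3 := by
          rw [norm_pow]
          exact pow_le_pow_left₀ (norm_nonneg _) hq 3
        have h3 : ‖(2*X*cc - X^2)^3‖ * ‖(1 - 2*X*cc + X^2)⁻¹‖ ≤ (3*‖X‖)^3 * 16 := by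
          apply mul_le_mul h2 hinv (norm_nonneg _) (by positivity)
        linarith
    _ ≤ 450*‖X‖^3 := by
        have e3 : (0:ℝ) ≤ ‖X‖^3 := by positivity
        nlinarith [norm_nonneg cc, pow_nonneg hX0 2]

theorem prod_expansion {ι : Type*} [DecidableEq ι] (s : Finset ι) (u : ι → ℂ) (μ : ℝ)
    (hμ : 0 ≤ μ) (hu : ∀ t ∈ s, ‖u t‖ ≤ μ) :
    ‖(∏ t ∈ s, (1 + u t)) - (1 + (∑ t ∈ s, u t)
        + ((∑ t ∈ s, u t)^2 - ∑ t ∈ s, (u t)^2)/2)‖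
      ≤ (s.card : ℝ)^3 * (1+μ)^(s.card) * μ^3 := by
  induction s using Finset.induction_on with
  | empty => simp
  | @insert x s hx ih =>
    have hus : ∀ t ∈ s, ‖u t‖ ≤ μ := fun t ht => hu t (mem_insert_of_mem ht)
    have hux : ‖u x‖ ≤ μ := hu x (mem_insert_self x s)
    have ih' := ih hus
    set U := ∑ t ∈ s, u t with hU
    set V := ∑ t ∈ s, (u t)^2 with hV
    set A := ∏ t ∈ s, (1 + u t) with hA
    set n := s.card with hn
    have hUb : ‖U‖ ≤ n * μ := by
      calc ‖U‖ ≤ ∑ t ∈ s, ‖u t‖ := norm_sum_le _ _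
        _ ≤ ∑ t ∈ s, μ := Finset.sum_le_sum hus
        _ = n * μ := by rw [Finset.sum_const, nsmul_eq_mul]
    have hVb : ‖V‖ ≤ n * μ^2 := by
      calc ‖V‖ ≤ ∑ t ∈ s, ‖(u t)^2‖ := norm_sum_le _ _
        _ ≤ ∑ t ∈ s, μ^2 := by
            refine Finset.sum_le_sum fun t ht => ?_
            rw [norm_pow]
            exact pow_le_pow_left₀ (norm_nonneg _) (hus t ht) 2
        _ = n * μ^2 := by rw [Finset.sum_const, nsmul_eq_mul]
    rw [Finset.prod_insert hx, Finset.sum_insert hx, Finset.sum_insert hx]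
    have alg : (1 + u x) * A - (1 + (u x + U) + ((u x + U)^2 - ((u x)^2 + V))/2)
        = (1 + u x) * (A - (1 + U + (U^2 - V)/2)) + u x * ((U^2 - V)/2) := by
      ring
    rw [alg]
    have card_ins : (insert x s).card = n + 1 := Finset.card_insert_of_notMem hx
    rw [card_ins]
    have b1 : ‖(1 + u x) * (A - (1 + U + (U^2 - V)/2))‖
        ≤ (1+μ) * ((n:ℝ)^3 * (1+μ)^n * μ^3) := by
      rw [norm_mul]
      apply mul_le_mul _ ih' (norm_nonneg _) (by positivity)
      calc ‖1 + u x‖ ≤ ‖(1:ℂ)‖ + ‖u x‖ := norm_add_le _ _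
        _ ≤ 1 + μ := by rw [norm_one]; linarith
    have b2 : ‖u x * ((U^2 - V)/2)‖ ≤ μ * ((n:ℝ)^2*μ^2 + n*μ^2)/2 := by
      rw [norm_mul]
      have h2 : ‖(U^2 - V)/2‖ ≤ ((n:ℝ)^2*μ^2 + n*μ^2)/2 := by
        rw [norm_div]
        have : ‖(2:ℂ)‖ = 2 := by norm_num
        rw [this]
        have : ‖U^2 - V‖ ≤ (n:ℝ)^2*μ^2 + n*μ^2 := by
          calc ‖U^2 - V‖ ≤ ‖U^2‖ + ‖V‖ := norm_sub_le _ _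
            _ ≤ (n:ℝ)^2*μ^2 + n*μ^2 := by
                rw [norm_pow]
                have : ‖U‖^2 ≤ ((n:ℝ)*μ)^2 := pow_le_pow_left₀ (norm_nonneg _) hUb 2
                nlinarith
        linarith
      calc ‖u x‖ * ‖(U^2 - V)/2‖ ≤ μ * (((n:ℝ)^2*μ^2 + n*μ^2)/2) := by
            apply mul_le_mul hux h2 (norm_nonneg _) hμ
        _ = μ * ((n:ℝ)^2*μ^2 + n*μ^2)/2 := by ring
    calc ‖(1 + u x) * (A - (1 + U + (U^2 - V)/2)) + u x * ((U^2 - V)/2)‖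
        ≤ ‖(1 + u x) * (A - (1 + U + (U^2 - V)/2))‖ + ‖u x * ((U^2 - V)/2)‖ :=
          norm_add_le _ _
      _ ≤ (1+μ) * ((n:ℝ)^3 * (1+μ)^n * μ^3) + μ * ((n:ℝ)^2*μ^2 + n*μ^2)/2 := by linarith
      _ ≤ ((n+1 : ℕ) : ℝ)^3 * (1+μ)^(n+1) * μ^3 := by
          push_cast
          have hs : (1+μ)^(n+1) = (1+μ)^n * (1+μ) := pow_succ _ _
          rw [hs]
          have hQ : (1:ℝ) ≤ (1+μ)^n * (1+μ) := by
            have := one_le_pow₀ (by linarith : (1:ℝ) ≤ 1+μ) (n := n)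
            nlinarith
          have hQ3 : μ^3 ≤ (1+μ)^n * (1+μ) * μ^3 :=
            le_mul_of_one_le_left (by positivity) hQ
          have hn0 : (0:ℝ) ≤ (n:ℝ) := Nat.cast_nonneg n
          have h4 : ((n:ℝ)^2+n)/2 ≤ 3*(n:ℝ)^2+3*n+1 := by nlinarith
          have t2 : μ * ((n:ℝ)^2*μ^2 + n*μ^2)/2
              ≤ (3*(n:ℝ)^2+3*n+1) * ((1+μ)^n * (1+μ) * μ^3) := by
            have heq : μ * ((n:ℝ)^2*μ^2 + n*μ^2)/2 = (((n:ℝ)^2+n)/2) * μ^3 := by ring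
            rw [heq]
            calc (((n:ℝ)^2+n)/2) * μ^3 ≤ (3*(n:ℝ)^2+3*n+1) * μ^3 := by
                  apply mul_le_mul_of_nonneg_right h4 (by positivity)
              _ ≤ (3*(n:ℝ)^2+3*n+1) * ((1+μ)^n * (1+μ) * μ^3) := by
                  apply mul_le_mul_of_nonneg_left hQ3 (by nlinarith)
          have he : ((n:ℝ)+1)^3 * ((1+μ)^n * (1+μ)) * μ^3
              = (n:ℝ)^3 * ((1+μ)^n * (1+μ)) * μ^3
                + (3*(n:ℝ)^2+3*n+1) * ((1+μ)^n * (1+μ) * μ^3) := by ring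
          have hb1 : (1+μ) * ((n:ℝ)^3 * (1+μ)^n * μ^3)
              = (n:ℝ)^3 * ((1+μ)^n * (1+μ)) * μ^3 := by ring
          linarith

theorem pointwise_bound {n : ℕ} (X : Fin n → ℂ) (ε : ℝ) (hε0 : 0 < ε) (hε34 : ε ≤ 3/4)
    (hX : ∀ t, ‖X t‖ ≤ ε) (θ : ℝ) :
    ‖(∏ t, (1 - 2*X t*(Real.cos θ:ℂ) + (X t)^2)⁻¹)
      - ((1 - ∑ t, (X t)^2) + (2*∑ t, X t)*(Real.cos θ:ℂ)
        + (2*(∑ t, X t)^2 + 2*∑ t, (X t)^2)*(Real.cos θ:ℂ)^2)‖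
    ≤ ((n:ℝ)^3*458^n*457^3 + 450*n + 455*459*(n:ℝ)^2) * ε^3 := by
  have hε1 : ε ≤ 1 := by linarith
  set cc : ℂ := (Real.cos θ : ℂ) with hcc
  have hccn : ‖cc‖ ≤ 1 := by
    rw [hcc, Complex.norm_real]; exact Real.abs_cos_le_one θ
  have hcc5 : ‖4*cc^2 - 1‖ ≤ 5 := by
    calc ‖4*cc^2 - 1‖ ≤ ‖4*cc^2‖ + ‖(1:ℂ)‖ := norm_sub_le _ _
      _ = 4*‖cc‖^2 + 1 := by
          rw [norm_mul, norm_pow, norm_one]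
          norm_num
      _ ≤ 5 := by nlinarith [norm_nonneg cc]
  have hX34 : ∀ t, ‖X t‖ ≤ 3/4 := fun t => (hX t).trans hε34
  set u : Fin n → ℂ := fun t => (1 - 2*X t*cc + (X t)^2)⁻¹ - 1 with hu_def
  set a : Fin n → ℂ := fun t => 2*X t*cc with ha_def
  set b : Fin n → ℂ := fun t => (X t)^2*(4*cc^2 - 1) with hb_def
  set E : Fin n → ℂ := fun t => (1 - 2*X t*cc + (X t)^2)⁻¹ - (1 + 2*X t*cc + (X t)^2*(4*cc^2-1))
    with hE_def
  have hsplit : ∀ t, u t = a t + b t + E t := by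
    intro t; simp only [hu_def, ha_def, hb_def, hE_def]; ring
  have hXc : ∀ t, ‖X t‖^3 ≤ ε^3 := fun t => pow_le_pow_left₀ (norm_nonneg _) (hX t) 3
  have hXc2 : ∀ t, ‖X t‖^2 ≤ ε^2 := fun t => pow_le_pow_left₀ (norm_nonneg _) (hX t) 2
  have hEb : ∀ t, ‖E t‖ ≤ 450*ε^3 := by
    intro t
    have := factor_err (X t) (hX34 t) θ
    rw [← hcc] at this
    calc ‖E t‖ ≤ 450*‖X t‖^3 := this
      _ ≤ 450*ε^3 := by nlinarith [hXc t]
  have hab : ∀ t, ‖a t‖ ≤ 2*ε := by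
    intro t
    simp only [ha_def]
    rw [norm_mul, norm_mul]
    have : ‖(2:ℂ)‖ = 2 := by norm_num
    rw [this]
    nlinarith [norm_nonneg (X t), hX t, norm_nonneg cc]
  have hbb : ∀ t, ‖b t‖ ≤ 5*ε^2 := by
    intro t
    simp only [hb_def]
    rw [norm_mul, norm_pow]
    nlinarith [hXc2 t, norm_nonneg (X t), sq_nonneg (‖X t‖), hcc5,
      norm_nonneg (4*cc^2 - 1), pow_nonneg (norm_nonneg (X t)) 2]
  have hub : ∀ t, ‖u t‖ ≤ 457*ε := by
    intro t
    rw [hsplit t]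
    calc ‖a t + b t + E t‖ ≤ ‖a t‖ + ‖b t‖ + ‖E t‖ := norm_add₃_le
      _ ≤ 2*ε + 5*ε^2 + 450*ε^3 := by linarith [hab t, hbb t, hEb t]
      _ ≤ 457*ε := by nlinarith
  -- apply prod_expansion
  have hprod : (∏ t, (1 - 2*X t*cc + (X t)^2)⁻¹) = ∏ t, (1 + u t) := by
    refine Finset.prod_congr rfl fun t _ => ?_
    simp only [hu_def]; ring
  have hPE := prod_expansion Finset.univ u (457*ε) (by positivity) (fun t _ => hub t)
  rw [Finset.card_univ, Fintype.card_fin] at hPE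
  have hK1 : ((n:ℝ))^3 * (1+457*ε)^n * (457*ε)^3 ≤ (n:ℝ)^3*458^n*457^3*ε^3 := by
    have h1 : (1+457*ε)^n ≤ (458:ℝ)^n := by
      apply pow_le_pow_left₀ (by linarith) (by linarith)
    have h2 : (457*ε)^3 = 457^3*ε^3 := by ring
    rw [h2]
    have hn3 : (0:ℝ) ≤ (n:ℝ)^3 := by positivity
    have he3 : (0:ℝ) ≤ 457^3*ε^3 := by positivity
    calc ((n:ℝ))^3 * (1+457*ε)^n * (457^3*ε^3)
        ≤ ((n:ℝ))^3 * (458:ℝ)^n * (457^3*ε^3) := by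
          apply mul_le_mul_of_nonneg_right _ he3
          exact mul_le_mul_of_nonneg_left h1 hn3
      _ = (n:ℝ)^3*458^n*457^3*ε^3 := by ring
  -- sums
  set U := ∑ t, u t with hU
  set Aa := ∑ t, a t with hAa
  set Ab := ∑ t, b t with hAb
  set W := ∑ t, E t with hW
  have hUsum : U = Aa + Ab + W := by
    rw [hU, hAa, hAb, hW, ← Finset.sum_add_distrib, ← Finset.sum_add_distrib]
    exact Finset.sum_congr rfl fun t _ => hsplit t
  have hWb : ‖W‖ ≤ n*(450*ε^3) := by
    calc ‖W‖ ≤ ∑ t, ‖E t‖ := norm_sum_le _ _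
      _ ≤ ∑ _t : Fin n, (450*ε^3) := Finset.sum_le_sum fun t _ => hEb t
      _ = n*(450*ε^3) := by rw [Finset.sum_const, nsmul_eq_mul, Finset.card_univ,
          Fintype.card_fin]
  have hdiff : ∀ t, ‖u t - a t‖ ≤ 455*ε^2 := by
    intro t
    rw [hsplit t]
    have : a t + b t + E t - a t = b t + E t := by ring
    rw [this]
    calc ‖b t + E t‖ ≤ ‖b t‖ + ‖E t‖ := norm_add_le _ _
      _ ≤ 5*ε^2 + 450*ε^3 := by linarith [hbb t, hEb t]
      _ ≤ 455*ε^2 := by nlinarith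
  have hsum_le : ∀ (g : Fin n → ℂ) (c : ℝ), (∀ t, ‖g t‖ ≤ c) → ‖∑ t, g t‖ ≤ n*c := by
    intro g c hg
    calc ‖∑ t, g t‖ ≤ ∑ t, ‖g t‖ := norm_sum_le _ _
      _ ≤ ∑ _t : Fin n, c := Finset.sum_le_sum fun t _ => hg t
      _ = n*c := by rw [Finset.sum_const, nsmul_eq_mul, Finset.card_univ, Fintype.card_fin]
  have hAaB : ‖Aa‖ ≤ n*(2*ε) := hsum_le a _ hab
  have hUB : ‖U‖ ≤ n*(457*ε) := hsum_le u _ hub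
  have hUA : ‖U - Aa‖ ≤ n*(455*ε^2) := by
    rw [hU, hAa, ← Finset.sum_sub_distrib]
    exact hsum_le _ _ hdiff
  have hsq : ‖U^2 - Aa^2‖ ≤ (n*(455*ε^2))*(n*(457*ε)+n*(2*ε)) := by
    have : U^2 - Aa^2 = (U - Aa)*(U + Aa) := by ring
    rw [this, norm_mul]
    apply mul_le_mul hUA _ (norm_nonneg _) (by positivity)
    calc ‖U + Aa‖ ≤ ‖U‖ + ‖Aa‖ := norm_add_le _ _
      _ ≤ n*(457*ε)+n*(2*ε) := by linarith
  have hVq : ‖(∑ t, (u t)^2) - ∑ t, (a t)^2‖ ≤ n*((455*ε^2)*(459*ε)) := by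
    rw [← Finset.sum_sub_distrib]
    apply hsum_le
    intro t
    have : (u t)^2 - (a t)^2 = (u t - a t)*(u t + a t) := by ring
    rw [this, norm_mul]
    have h1 : ‖u t + a t‖ ≤ 459*ε := by
      calc ‖u t + a t‖ ≤ ‖u t‖ + ‖a t‖ := norm_add_le _ _
        _ ≤ 459*ε := by linarith [hub t, hab t]
    apply mul_le_mul (hdiff t) h1 (norm_nonneg _) (by positivity)
  -- identity for M
  have hsa : Aa = (∑ t, X t) * (2*cc) := by
    rw [hAa, Finset.sum_mul]
    exact Finset.sum_congr rfl fun t _ => by simp only [ha_def]; ring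
  have hsa2 : (∑ t, (a t)^2) = (∑ t, (X t)^2) * (4*cc^2) := by
    rw [Finset.sum_mul]
    exact Finset.sum_congr rfl fun t _ => by simp only [ha_def]; ring
  have hsb : Ab = (∑ t, (X t)^2) * (4*cc^2 - 1) := by
    rw [hAb, Finset.sum_mul]
  have hM : ((1 - ∑ t, (X t)^2) + (2*∑ t, X t)*cc
        + (2*(∑ t, X t)^2 + 2*∑ t, (X t)^2)*cc^2)
      = 1 + Aa + Ab + (Aa^2 - ∑ t, (a t)^2)/2 := by
    rw [hsa, hsa2, hsb]; ring
  -- conclude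
  rw [hprod, hM]
  have halg : (∏ t, (1 + u t)) - (1 + Aa + Ab + (Aa^2 - ∑ t, (a t)^2)/2)
      = ((∏ t, (1 + u t)) - (1 + U + (U^2 - ∑ t, (u t)^2)/2))
        + (W + (U^2 - Aa^2)/2 - ((∑ t, (u t)^2) - ∑ t, (a t)^2)/2) := by
    rw [hUsum]; ring
  rw [halg]
  have hfin : ‖((∏ t, (1 + u t)) - (1 + U + (U^2 - ∑ t, (u t)^2)/2))
        + (W + (U^2 - Aa^2)/2 - ((∑ t, (u t)^2) - ∑ t, (a t)^2)/2)‖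
      ≤ ((n:ℝ))^3 * (1+457*ε)^n * (457*ε)^3
        + (n*(450*ε^3) + ((n*(455*ε^2))*(n*(457*ε)+n*(2*ε)))/2
          + (n*((455*ε^2)*(459*ε)))/2) := by
    refine (norm_add_le _ _).trans ?_
    have t2 : ‖W + (U^2 - Aa^2)/2 - ((∑ t, (u t)^2) - ∑ t, (a t)^2)/2‖
        ≤ n*(450*ε^3) + ((n*(455*ε^2))*(n*(457*ε)+n*(2*ε)))/2
          + (n*((455*ε^2)*(459*ε)))/2 := by
      refine (norm_sub_le _ _).trans ?_
      have := norm_add_le W ((U^2 - Aa^2)/2)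
      have e1 : ‖(U^2 - Aa^2)/2‖ = ‖U^2 - Aa^2‖/2 := by
        rw [norm_div]; norm_num
      have e2 : ‖((∑ t, (u t)^2) - ∑ t, (a t)^2)/2‖
          = ‖(∑ t, (u t)^2) - ∑ t, (a t)^2‖/2 := by
        rw [norm_div]; norm_num
      rw [e2]
      linarith [hsq, hVq, this, e1]
    linarith [hPE, t2]
  refine hfin.trans ?_
  have hnn : (n:ℝ) ≤ (n:ℝ)^2 := by
    have : n ≤ n^2 := Nat.le_self_pow two_ne_zero n
    exact_mod_cast this
  have hn0 : (0:ℝ) ≤ (n:ℝ) := Nat.cast_nonneg n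
  nlinarith [hK1, mul_nonneg hn0 (by positivity : (0:ℝ) ≤ ε^3),
    mul_le_mul_of_nonneg_right hnn (by positivity : (0:ℝ) ≤ ε^3)]

theorem R1 : ∫ x in (0:ℝ)..π, Real.sin x ^ 2 = π/2 := by
  rw [integral_sin_sq]; simp

theorem R2 : ∫ x in (0:ℝ)..π, Real.cos x * Real.sin x ^ 2 = 0 := by
  have h : ∀ x ∈ Set.uIcc (0:ℝ) π, HasDerivAt (fun y => Real.sin y ^ 3 / 3)
      (Real.cos x * Real.sin x ^ 2) x := by
    intro x _
    have := ((Real.hasDerivAt_sin x).pow 3).div_const 3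
    refine this.congr_deriv ?_
    ring
  rw [integral_eq_sub_of_hasDerivAt h ((Continuous.intervalIntegrable (by continuity) _ _))]
  simp

theorem R3 : ∫ x in (0:ℝ)..π, Real.cos x ^ 2 * Real.sin x ^ 2 = π/8 := by
  have h : ∀ x ∈ Set.uIcc (0:ℝ) π, HasDerivAt (fun y => y/8 - Real.sin (4*y) / 32)
      (Real.cos x ^ 2 * Real.sin x ^ 2) x := by
    intro x _
    have h1 : HasDerivAt (fun y : ℝ => 4*y) 4 x := by
      simpa using (hasDerivAt_id x).const_mul 4
    have h2 := ((Real.hasDerivAt_sin (4*x)).comp x h1).div_const 32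
    have h3 := ((hasDerivAt_id x).div_const 8).sub h2
    refine h3.congr_deriv ?_
    have hc : Real.cos (4*x) = 1 - 8 * (Real.cos x^2 * Real.sin x^2) := by
      have e1 : Real.cos (4*x) = 2 * Real.cos (2*x)^2 - 1 := by
        have := Real.cos_two_mul (2*x)
        rw [show (2:ℝ)*(2*x) = 4*x by ring] at this
        exact this
      have e2 : Real.cos (2*x) = 1 - 2 * Real.sin x ^ 2 := by
        have h2 := Real.cos_two_mul' x
        have e3 := Real.sin_sq_add_cos_sq x
        linarith
      have e3 := Real.sin_sq_add_cos_sq x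
      nlinarith
    rw [hc]
    ring
  rw [integral_eq_sub_of_hasDerivAt h ((Continuous.intervalIntegrable (by continuity) _ _))]
  have : Real.sin (4*π) = 0 := by
    rw [show (4:ℝ)*π = 2*(2*π) by ring, Real.sin_two_mul, Real.sin_two_pi]
    ring
  rw [this]
  norm_num

theorem IC1 : ∫ θ in (0:ℝ)..π, ((Real.sin θ : ℂ))^2 = ((π/2 : ℝ) : ℂ) := by
  rw [show (fun θ : ℝ => ((Real.sin θ : ℂ))^2) = fun θ : ℝ => ((Real.sin θ^2 : ℝ) : ℂ) by
    funext θ; push_cast; ring]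
  rw [intervalIntegral.integral_ofReal, R1]

theorem IC2 : ∫ θ in (0:ℝ)..Real.pi, (Real.cos θ : ℂ)*((Real.sin θ : ℂ))^2 = 0 := by
  rw [show (fun θ : ℝ => (Real.cos θ : ℂ)*((Real.sin θ : ℂ))^2)
      = fun θ : ℝ => ((Real.cos θ * Real.sin θ^2 : ℝ) : ℂ) by
    funext θ; push_cast; ring]
  rw [intervalIntegral.integral_ofReal, R2]
  simp

theorem IC3 : ∫ θ in (0:ℝ)..Real.pi, ((Real.cos θ : ℂ))^2*((Real.sin θ : ℂ))^2
    = ((Real.pi/8 : ℝ) : ℂ) := by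
  rw [show (fun θ : ℝ => ((Real.cos θ : ℂ))^2*((Real.sin θ : ℂ))^2)
      = fun θ : ℝ => ((Real.cos θ^2 * Real.sin θ^2 : ℝ) : ℂ) by
    funext θ; push_cast; ring]
  rw [intervalIntegral.integral_ofReal, R3]

/-- For every positive integer `r` there is `C = C(r) > 0` such that
for every prime `p`, every complex `z` with `|z| ≤ 1`, and all complex `s, w, α₁,…,α_r`
with `Re(s+α_j) ≥ 1/2` for all `j` and `Re(w) ≥ 1/2`, one has
`|(2/π) ∫₀^π ∏_j C(p^{-(s+α_j)};θ) · C(z p^{-w};θ) sin²θ dθ − 1 − ∑_i z p^{-(s+w+α_i)}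
  − ∑_{i<j} p^{-(2s+α_i+α_j)} − ∑_{i≤j} z² p^{-(2s+2w+α_i+α_j)}| ≤ C p^{-3/2}`,
where `C(X;θ) = (1 - 2X cos θ + X²)⁻¹`. -/
theorem FA_twisted_local_factor_estimate (r : ℕ) (hr : 0 < r) :
    ∃ C : ℝ, 0 < C ∧ ∀ (p : ℕ), p.Prime → ∀ (z : ℂ), ‖z‖ ≤ 1 →
      ∀ (s w : ℂ) (α : Fin r → ℂ),
      (∀ j, (1 : ℝ) / 2 ≤ (s + α j).re) → (1 : ℝ) / 2 ≤ w.re →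
      ‖(2 / (Real.pi : ℂ)) * (∫ θ in (0:ℝ)..Real.pi,
            (∏ j, (1 - 2 * (p : ℂ) ^ (-(s + α j)) * (Real.cos θ : ℂ)
                + ((p : ℂ) ^ (-(s + α j))) ^ 2)⁻¹) *
              (1 - 2 * z * (p : ℂ) ^ (-w) * (Real.cos θ : ℂ)
                + z ^ 2 * ((p : ℂ) ^ (-w)) ^ 2)⁻¹ * (Real.sin θ : ℂ) ^ 2)
          - 1 - (∑ i : Fin r, z * (p : ℂ) ^ (-(s + w + α i)))
          - (∑ i : Fin r, ∑ j ∈ Finset.Ioi i, (p : ℂ) ^ (-(2 * s + α i + α j)))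
          - (∑ i : Fin r, ∑ j ∈ Finset.Ici i,
              z ^ 2 * (p : ℂ) ^ (-(2 * s + 2 * w + α i + α j)))‖
        ≤ C * (p : ℝ) ^ (-(3 / 2) : ℝ) := by
  set K : ℝ := ((r:ℝ)+1)^3*458^(r+1)*457^3 + 450*((r:ℝ)+1) + 455*459*((r:ℝ)+1)^2 with hK
  have hK0 : 0 < K := by positivity
  refine ⟨2*K + (r:ℝ)^2 + 1, by positivity, ?_⟩
  intro p hp z hz s w α hα hw
  have hp1 : (1:ℝ) ≤ (p:ℝ) := by exact_mod_cast hp.one_lt.le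
  have hp2 : (2:ℝ) ≤ (p:ℝ) := by exact_mod_cast hp.two_le
  have hp0 : (0:ℝ) < (p:ℝ) := by linarith
  have hpne : (p:ℂ) ≠ 0 := by
    exact_mod_cast Nat.cast_ne_zero.2 hp.pos.ne'
  set ε : ℝ := (p:ℝ) ^ (-(1/2) : ℝ) with hεdef
  have hε0 : 0 < ε := Real.rpow_pos_of_pos hp0 _
  have hε34 : ε ≤ 3/4 := by
    have ha : (2:ℝ)^((1:ℝ)/2) ≤ (p:ℝ)^((1:ℝ)/2) :=
      Real.rpow_le_rpow (by norm_num) hp2 (by norm_num)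
    have hb : ((2:ℝ)^((1:ℝ)/2))^(2:ℕ) = 2 := by
      rw [← Real.rpow_natCast ((2:ℝ)^((1:ℝ)/2)) 2, ← Real.rpow_mul (by norm_num)]
      norm_num
    have hposs : (0:ℝ) < (2:ℝ)^((1:ℝ)/2) := Real.rpow_pos_of_pos (by norm_num) _
    have h43 : (4:ℝ)/3 ≤ (p:ℝ)^((1:ℝ)/2) := by nlinarith
    have hεinv : ε = ((p:ℝ)^((1:ℝ)/2))⁻¹ := by
      rw [hεdef, show (-(1/2) : ℝ) = -((1:ℝ)/2) by norm_num, Real.rpow_neg hp0.le]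
    rw [hεinv]
    have := inv_anti₀ (by norm_num : (0:ℝ) < 4/3) h43
    calc ((p:ℝ)^((1:ℝ)/2))⁻¹ ≤ ((4:ℝ)/3)⁻¹ := this
      _ ≤ 3/4 := by norm_num
  have hε1 : ε ≤ 1 := by linarith
  have hε3 : ε^3 = (p:ℝ) ^ (-(3/2) : ℝ) := by
    rw [hεdef, ← Real.rpow_natCast ((p:ℝ) ^ (-(1/2) : ℝ)) 3, ← Real.rpow_mul hp0.le]
    norm_num
  set Y : ℂ := z * (p:ℂ)^(-w) with hYdef
  set X : Fin (r+1) → ℂ := Fin.snoc (fun j => (p:ℂ)^(-(s+α j))) Y with hXdef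
  have hcpow : ∀ (y : ℂ), ‖(p:ℂ)^y‖ = (p:ℝ)^(y.re) := by
    intro y
    rw [show ((p:ℕ):ℂ) = (((p:ℝ)):ℂ) by push_cast; rfl]
    rw [Complex.norm_cpow_eq_rpow_re_of_pos hp0]
  have hXj : ∀ j : Fin r, ‖(p:ℂ)^(-(s+α j))‖ ≤ ε := by
    intro j
    rw [hcpow, hεdef]
    have hre : (-(s+α j)).re = -((s+α j).re) := by simp
    rw [hre]
    exact Real.rpow_le_rpow_of_exponent_le hp1 (by linarith [hα j])
  have hzn : ‖z‖ ≤ 1 := hz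
  have hYb : ‖Y‖ ≤ ε := by
    rw [hYdef, norm_mul, hcpow, hεdef]
    have hre : (-w).re = -(w.re) := by simp
    rw [hre]
    have h1 : (p:ℝ)^(-w.re) ≤ (p:ℝ)^(-(1/2):ℝ) :=
      Real.rpow_le_rpow_of_exponent_le hp1 (by linarith)
    have h2 : (0:ℝ) ≤ (p:ℝ)^(-w.re) := (Real.rpow_pos_of_pos hp0 _).le
    nlinarith [norm_nonneg z]
  have hXb : ∀ t, ‖X t‖ ≤ ε := by
    intro t
    refine Fin.lastCases ?_ (fun j => ?_) t
    · rw [hXdef]; simp only [Fin.snoc_last]; exact hYb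
    · rw [hXdef]; simp only [Fin.snoc_castSucc]; exact hXj j
  set S : ℂ := ∑ t, X t with hSdef
  set Q : ℂ := ∑ t, (X t)^2 with hQdef
  set SX : ℂ := ∑ j : Fin r, (p:ℂ)^(-(s+α j)) with hSXdef
  set QX : ℂ := ∑ j : Fin r, ((p:ℂ)^(-(s+α j)))^2 with hQXdef
  have hSsplit : S = SX + Y := by
    rw [hSdef, Fin.sum_univ_castSucc, hSXdef]
    simp [hXdef]
  have hQsplit : Q = QX + Y^2 := by
    rw [hQdef, Fin.sum_univ_castSucc, hQXdef]
    simp [hXdef]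
  set F : ℝ → ℂ := fun θ => ∏ t, (1 - 2*X t*(Real.cos θ:ℂ) + (X t)^2)⁻¹ with hFdef
  set M : ℝ → ℂ := fun θ =>
    (1-Q) + (2*S)*(Real.cos θ:ℂ) + (2*S^2+2*Q)*(Real.cos θ:ℂ)^2 with hMdef
  have hXlt : ∀ t, ‖X t‖ < 1 := fun t => lt_of_le_of_lt (hXb t) (by linarith)
  have hFcont : Continuous F := by
    rw [hFdef]
    apply continuous_finset_prod
    intro t _
    apply Continuous.inv₀
    · apply Continuous.add
      · apply Continuous.sub continuous_const
        exact (continuous_const.mul (Complex.continuous_ofReal.comp Real.continuous_cos))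
      · exact continuous_const
    · exact fun θ => factor_ne (X t) (hXlt t) θ
  have hMcont : Continuous M := by
    rw [hMdef]
    have hc : Continuous fun θ : ℝ => (Real.cos θ : ℂ) :=
      Complex.continuous_ofReal.comp Real.continuous_cos
    exact (continuous_const.add (continuous_const.mul hc)).add
      (continuous_const.mul (hc.pow 2))
  have hIF : IntervalIntegrable (fun θ => F θ * (Real.sin θ:ℂ)^2)
      MeasureTheory.volume 0 Real.pi := by
    apply Continuous.intervalIntegrable
    exact hFcont.mul ((Complex.continuous_ofReal.comp Real.continuous_sin).pow 2)
  have hIM : IntervalIntegrable (fun θ => M θ * (Real.sin θ:ℂ)^2)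
      MeasureTheory.volume 0 Real.pi := by
    apply Continuous.intervalIntegrable
    exact hMcont.mul ((Complex.continuous_ofReal.comp Real.continuous_sin).pow 2)
  have hID : IntervalIntegrable (fun θ => (F θ - M θ) * (Real.sin θ:ℂ)^2)
      MeasureTheory.volume 0 Real.pi := by
    apply Continuous.intervalIntegrable
    exact (hFcont.sub hMcont).mul
      ((Complex.continuous_ofReal.comp Real.continuous_sin).pow 2)
  have hinteg : (∫ θ in (0:ℝ)..Real.pi,
            (∏ j, (1 - 2 * (p : ℂ) ^ (-(s + α j)) * (Real.cos θ : ℂ)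
                + ((p : ℂ) ^ (-(s + α j))) ^ 2)⁻¹) *
              (1 - 2 * z * (p : ℂ) ^ (-w) * (Real.cos θ : ℂ)
                + z ^ 2 * ((p : ℂ) ^ (-w)) ^ 2)⁻¹ * (Real.sin θ : ℂ) ^ 2)
      = ∫ θ in (0:ℝ)..Real.pi, F θ * (Real.sin θ:ℂ)^2 := by
    have efun : (fun θ : ℝ =>
            (∏ j : Fin r, (1 - 2 * (p : ℂ) ^ (-(s + α j)) * (Real.cos θ : ℂ)
                + ((p : ℂ) ^ (-(s + α j))) ^ 2)⁻¹) *
              (1 - 2 * z * (p : ℂ) ^ (-w) * (Real.cos θ : ℂ)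
                + z ^ 2 * ((p : ℂ) ^ (-w)) ^ 2)⁻¹ * (Real.sin θ : ℂ) ^ 2)
        = fun θ : ℝ => F θ * (Real.sin θ:ℂ)^2 := by
      funext θ
      have hY2 : (1 - 2 * z * (p : ℂ) ^ (-w) * (Real.cos θ : ℂ)
          + z ^ 2 * ((p : ℂ) ^ (-w)) ^ 2) = 1 - 2*Y*(Real.cos θ:ℂ) + Y^2 := by
        rw [hYdef]; ring
      have hprod : (∏ t, (1 - 2*X t*(Real.cos θ:ℂ) + (X t)^2)⁻¹)
          = (∏ j : Fin r, (1 - 2 * (p : ℂ) ^ (-(s + α j)) * (Real.cos θ : ℂ)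
              + ((p : ℂ) ^ (-(s + α j))) ^ 2)⁻¹) * (1 - 2*Y*(Real.cos θ:ℂ) + Y^2)⁻¹ := by
        rw [Fin.prod_univ_castSucc]
        congr 1
        · exact Finset.prod_congr rfl fun j _ => by rw [hXdef]; simp [Fin.snoc_castSucc]
        · rw [hXdef]; simp [Fin.snoc_last]
      simp only [hFdef]
      rw [hprod, hY2]
    rw [efun]
  have hsplit_int : (∫ θ in (0:ℝ)..Real.pi, F θ * (Real.sin θ:ℂ)^2)
      = (∫ θ in (0:ℝ)..Real.pi, M θ * (Real.sin θ:ℂ)^2)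
        + ∫ θ in (0:ℝ)..Real.pi, (F θ - M θ) * (Real.sin θ:ℂ)^2 := by
    rw [← intervalIntegral.integral_add hIM hID]
    apply intervalIntegral.integral_congr
    intro θ _
    ring
  have hMint : (∫ θ in (0:ℝ)..Real.pi, M θ * (Real.sin θ:ℂ)^2)
      = (1-Q)*((Real.pi/2 : ℝ):ℂ) + (2*S^2+2*Q)*((Real.pi/8 : ℝ):ℂ) := by
    have hsin : Continuous fun θ : ℝ => ((Real.sin θ : ℂ))^2 :=
      (Complex.continuous_ofReal.comp Real.continuous_sin).pow 2
    have hcos : Continuous fun θ : ℝ => (Real.cos θ : ℂ) :=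
      Complex.continuous_ofReal.comp Real.continuous_cos
    have e1 : (fun θ => M θ * (Real.sin θ:ℂ)^2)
        = fun θ => ((1-Q)*((Real.sin θ:ℂ)^2)
            + ((2*S)*((Real.cos θ:ℂ)*(Real.sin θ:ℂ)^2)
              + (2*S^2+2*Q)*((Real.cos θ:ℂ)^2*(Real.sin θ:ℂ)^2))) := by
      funext θ; rw [hMdef]; ring
    rw [e1]
    rw [intervalIntegral.integral_add, intervalIntegral.integral_add,
      intervalIntegral.integral_const_mul, intervalIntegral.integral_const_mul,
      intervalIntegral.integral_const_mul, IC1, IC2, IC3]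
    · ring
    · exact (continuous_const.mul (hcos.mul hsin)).intervalIntegrable _ _
    · exact (continuous_const.mul ((hcos.pow 2).mul hsin)).intervalIntegrable _ _
    · exact (continuous_const.mul hsin).intervalIntegrable _ _
    · exact ((continuous_const.mul (hcos.mul hsin)).add
        (continuous_const.mul ((hcos.pow 2).mul hsin))).intervalIntegrable _ _
  have hπne : ((Real.pi : ℝ):ℂ) ≠ 0 := by
    exact_mod_cast Complex.ofReal_ne_zero.2 Real.pi_ne_zero
  have hmain : (2/(Real.pi:ℂ)) * ∫ θ in (0:ℝ)..Real.pi, M θ * (Real.sin θ:ℂ)^2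
      = 1 + (S^2-Q)/2 := by
    rw [hMint]
    push_cast
    field_simp
    ring
  have hDb : ‖∫ θ in (0:ℝ)..Real.pi, (F θ - M θ) * (Real.sin θ:ℂ)^2‖
      ≤ K*ε^3*Real.pi := by
    have hb : ∀ θ ∈ Set.uIoc (0:ℝ) Real.pi, ‖(F θ - M θ) * (Real.sin θ:ℂ)^2‖ ≤ K*ε^3 := by
      intro θ _
      rw [norm_mul]
      have h1 : ‖F θ - M θ‖ ≤ K*ε^3 := by
        have hpb := pointwise_bound X ε hε0 hε34 hXb θ
        rw [Nat.cast_add, Nat.cast_one] at hpb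
        simp only [hFdef, hMdef, hSdef, hQdef, hK]
        exact hpb
      have h2 : ‖(Real.sin θ:ℂ)^2‖ ≤ 1 := by
        rw [norm_pow, Complex.norm_real, Real.norm_eq_abs]
        have := Real.abs_sin_le_one θ
        nlinarith [abs_nonneg (Real.sin θ)]
      calc ‖F θ - M θ‖ * ‖(Real.sin θ:ℂ)^2‖ ≤ (K*ε^3) * 1 :=
            mul_le_mul h1 h2 (norm_nonneg _) (by positivity)
        _ = K*ε^3 := mul_one _
    have := intervalIntegral.norm_integral_le_of_norm_le_const hb
    rw [sub_zero, abs_of_pos Real.pi_pos] at this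
    exact this
  have hBb : ‖(2/(Real.pi:ℂ)) * ∫ θ in (0:ℝ)..Real.pi, (F θ - M θ) * (Real.sin θ:ℂ)^2‖
      ≤ 2*K*ε^3 := by
    rw [norm_mul]
    have hn2 : ‖(2/(Real.pi:ℂ))‖ = 2/Real.pi := by
      rw [norm_div, Complex.norm_real]
      simp [abs_of_pos Real.pi_pos]
    rw [hn2]
    have hd := hDb
    have hπ0 : (0:ℝ) < Real.pi := Real.pi_pos
    calc 2/Real.pi * ‖∫ θ in (0:ℝ)..Real.pi, (F θ - M θ) * (Real.sin θ:ℂ)^2‖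
        ≤ 2/Real.pi * (K*ε^3*Real.pi) := by
          apply mul_le_mul_of_nonneg_left hd (by positivity)
      _ = 2*K*ε^3 := by field_simp
  have hS1 : (∑ i : Fin r, z * (p : ℂ) ^ (-(s + w + α i))) = Y * SX := by
    rw [hYdef, hSXdef, Finset.mul_sum]
    apply Finset.sum_congr rfl
    intro i _
    rw [show -(s + w + α i) = (-w) + (-(s + α i)) by ring, Complex.cpow_add _ _ hpne]
    ring
  have hS2 : (∑ i : Fin r, ∑ j ∈ Finset.Ioi i, (p : ℂ) ^ (-(2 * s + α i + α j)))
      = (SX^2 - QX)/2 := by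
    have e1 : (∑ i : Fin r, ∑ j ∈ Finset.Ioi i, (p : ℂ) ^ (-(2 * s + α i + α j)))
        = ∑ i : Fin r, ∑ j ∈ Finset.Ioi i,
            ((p:ℂ)^(-(s+α i))) * ((p:ℂ)^(-(s+α j))) := by
      refine Finset.sum_congr rfl fun i _ => Finset.sum_congr rfl fun j _ => ?_
      rw [show -(2*s + α i + α j) = (-(s+α i)) + (-(s+α j)) by ring,
        Complex.cpow_add _ _ hpne]
    rw [e1, pair_sum (fun j => (p:ℂ)^(-(s+α j))), hSXdef, hQXdef]
  have hS3 : ‖(∑ i : Fin r, ∑ j ∈ Finset.Ici i,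
      z ^ 2 * (p : ℂ) ^ (-(2 * s + 2 * w + α i + α j)))‖ ≤ (r:ℝ)^2 * ε^3 := by
    have hterm : ∀ (i j : Fin r), ‖z ^ 2 * (p : ℂ) ^ (-(2 * s + 2 * w + α i + α j))‖ ≤ ε^3 := by
      intro i j
      rw [norm_mul, norm_pow, hcpow]
      have hre : (-(2 * s + 2 * w + α i + α j)).re
          = -(2*s.re + 2*w.re + (α i).re + (α j).re) := by
        simp [Complex.add_re, Complex.mul_re]
        try ring
      rw [hre]
      have hi := hα i
      have hj := hα j
      rw [Complex.add_re] at hi hj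
      have h1 : (p:ℝ)^(-(2*s.re + 2*w.re + (α i).re + (α j).re)) ≤ (p:ℝ)^(-(3/2):ℝ) :=
        Real.rpow_le_rpow_of_exponent_le hp1 (by linarith)
      rw [← hε3] at h1
      have h2 : (0:ℝ) ≤ (p:ℝ)^(-(2*s.re + 2*w.re + (α i).re + (α j).re)) :=
        (Real.rpow_pos_of_pos hp0 _).le
      have hz2 : ‖z‖^2 ≤ 1 := by nlinarith [norm_nonneg z]
      nlinarith [pow_pos hε0 3]
    calc ‖(∑ i : Fin r, ∑ j ∈ Finset.Ici i,
          z ^ 2 * (p : ℂ) ^ (-(2 * s + 2 * w + α i + α j)))‖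
        ≤ ∑ i : Fin r, ‖∑ j ∈ Finset.Ici i,
            z ^ 2 * (p : ℂ) ^ (-(2 * s + 2 * w + α i + α j))‖ := norm_sum_le _ _
      _ ≤ ∑ _i : Fin r, (r:ℝ)*ε^3 := by
          refine Finset.sum_le_sum fun i _ => ?_
          calc ‖∑ j ∈ Finset.Ici i, z ^ 2 * (p : ℂ) ^ (-(2 * s + 2 * w + α i + α j))‖
              ≤ ∑ j ∈ Finset.Ici i, ‖z ^ 2 * (p : ℂ) ^ (-(2 * s + 2 * w + α i + α j))‖ :=
                norm_sum_le _ _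
            _ ≤ ∑ _j ∈ Finset.Ici i, ε^3 := Finset.sum_le_sum fun j _ => hterm i j
            _ = (Finset.Ici i).card * ε^3 := by rw [Finset.sum_const, nsmul_eq_mul]
            _ ≤ (r:ℝ)*ε^3 := by
                apply mul_le_mul_of_nonneg_right _ (pow_pos hε0 3).le
                have hle : (Finset.Ici i).card ≤ r := by
                  simpa using Finset.card_le_univ (Finset.Ici i)
                exact_mod_cast hle
      _ = (r:ℝ)^2*ε^3 := by
          rw [Finset.sum_const, nsmul_eq_mul]
          simp
          ring
  rw [hinteg, hsplit_int, mul_add, hmain, hS1, hS2]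
  have hcancel : (1 + (S^2-Q)/2)
        + (2/(Real.pi:ℂ)) * (∫ θ in (0:ℝ)..Real.pi, (F θ - M θ) * (Real.sin θ:ℂ)^2)
        - 1 - Y*SX - (SX^2 - QX)/2
        - (∑ i : Fin r, ∑ j ∈ Finset.Ici i,
            z ^ 2 * (p : ℂ) ^ (-(2 * s + 2 * w + α i + α j)))
      = ((2/(Real.pi:ℂ)) * ∫ θ in (0:ℝ)..Real.pi, (F θ - M θ) * (Real.sin θ:ℂ)^2)
        - (∑ i : Fin r, ∑ j ∈ Finset.Ici i,
            z ^ 2 * (p : ℂ) ^ (-(2 * s + 2 * w + α i + α j))) := by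
    rw [hSsplit, hQsplit]; ring
  rw [hcancel]
  calc ‖((2/(Real.pi:ℂ)) * ∫ θ in (0:ℝ)..Real.pi, (F θ - M θ) * (Real.sin θ:ℂ)^2)
        - (∑ i : Fin r, ∑ j ∈ Finset.Ici i,
            z ^ 2 * (p : ℂ) ^ (-(2 * s + 2 * w + α i + α j)))‖
      ≤ ‖(2/(Real.pi:ℂ)) * ∫ θ in (0:ℝ)..Real.pi, (F θ - M θ) * (Real.sin θ:ℂ)^2‖
        + ‖(∑ i : Fin r, ∑ j ∈ Finset.Ici i,
            z ^ 2 * (p : ℂ) ^ (-(2 * s + 2 * w + α i + α j)))‖ := norm_sub_le _ _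
    _ ≤ 2*K*ε^3 + (r:ℝ)^2 * ε^3 := by linarith
    _ ≤ (2*K + (r:ℝ)^2 + 1) * ((p:ℝ) ^ (-(3/2) : ℝ)) := by
        rw [← hε3]
        nlinarith [pow_pos hε0 3]
end

section
/- Let x, y be nonzero complex numbers and ν ≥ 3 an integer. Then for every integer i with 1 ≤ i ≤ ν−2, one has (1 + x²/y²)·A_{i,ν} − (x/y)·A_{i−1,ν} − (x/y)·A_{i+1,ν} = 0. -/
lemma sum_Icc_bot {M : Type*} [AddCommMonoid M] (f : ℕ → M) {a b : ℕ} (h : a ≤ b) :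
    ∑ c ∈ Finset.Icc a b, f c = f a + ∑ c ∈ Finset.Icc (a + 1) b, f c := by
  rw [← Finset.sum_insert (by simp), Finset.Icc_add_one_left_eq_Ioc, Finset.Ioc_insert_left h]

noncomputable def Acoeff (x y : ℂ) (ν i : ℕ) : ℂ :=
  -y ^ 2 * (y / x) ^ i
    - (1 - x ^ 2) * (x / y) ^ i * (∑ c ∈ Finset.Icc (i + 1) ν, (y / x) ^ (2 * c))
    + (y ^ (2 * (ν + 1)) / x ^ (2 * ν)) * (x / y) ^ i

set_option maxHeartbeats 1000000 in
/-- For nonzero complex `x, y`, an integer `ν ≥ 3` and `1 ≤ i ≤ ν−2`,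
`(1 + x²/y²) A_{i,ν} − (x/y) A_{i−1,ν} − (x/y) A_{i+1,ν} = 0`. -/
theorem Acoeff_telescopic (x y : ℂ) (hx : x ≠ 0) (hy : y ≠ 0)
    (ν : ℕ) (hν : 3 ≤ ν) (i : ℕ) (hi1 : 1 ≤ i) (hi2 : i ≤ ν - 2) :
    (1 + x ^ 2 / y ^ 2) * Acoeff x y ν i
      - (x / y) * Acoeff x y ν (i - 1) - (x / y) * Acoeff x y ν (i + 1) = 0 := by
  obtain ⟨j, rfl⟩ : ∃ j, i = j + 1 := ⟨i - 1, (Nat.succ_pred_eq_of_pos hi1).symm⟩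
  have h1 : j + 1 ≤ ν := by omega
  have h2 : j + 2 ≤ ν := by omega
  set r : ℂ := y / x with hrdef
  have hr : r ≠ 0 := div_ne_zero hy hx
  have hxy : x / y = r⁻¹ := by rw [hrdef, inv_div]
  have hP : y ^ (2 * (ν + 1)) / x ^ (2 * ν) = y ^ 2 * r ^ (2 * ν) := by
    rw [hrdef, div_pow, show 2 * (ν + 1) = 2 * ν + 2 by ring, pow_add]
    field_simp
  simp only [Acoeff, Nat.add_sub_cancel, show j + 1 + 1 = j + 2 from rfl,
    show j + 2 + 1 = j + 3 from rfl, hxy, hP, ← hrdef]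
  rw [sum_Icc_bot _ h1, sum_Icc_bot _ h2]
  generalize (∑ c ∈ Finset.Icc (j + 3) ν, r ^ (2 * c)) = S
  have e1 : r ^ (2 * (j + 1)) = (r ^ j) ^ 2 * r ^ 2 := by
    rw [show 2 * (j + 1) = 2 * j + 2 by ring, pow_add, pow_mul']
  have e2 : r ^ (2 * (j + 2)) = (r ^ j) ^ 2 * r ^ 4 := by
    rw [show 2 * (j + 2) = 2 * j + 4 by ring, pow_add, pow_mul']
  simp only [e1, e2, inv_pow, pow_add, mul_inv]
  have hyr : y = x * r := by rw [hrdef]; field_simp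
  clear_value r
  clear hxy hP e1 e2 hrdef
  subst hyr
  generalize (r : ℂ) ^ (2 * ν) = C
  have hR : (r : ℂ) ^ j ≠ 0 := pow_ne_zero j hr
  generalize (r : ℂ) ^ j = R at hR
  field_simp
  ring
end

section
/- Let t be a complex number, let x, y be nonzero complex numbers with x² ≠ 1, and let ν be a nonnegative integer. Then (x/y)^ν · { [1 + (1−x²)·∑_{c=1}^{ν} (y/x)^{2c} − y^{2(ν+1)}/x^{2ν}] + (1 − 2t(x/y) + (x/y)²)·[ −y²·∑_{c=1}^{ν} (y/x)^{c−1}·U_{c−1}(t) − (1−x²)·∑_{c=1}^{ν} (y/x)^{2c}·∑_{m=0}^{c−1} (x/y)^m·U_m(t) + (y^{2(ν+1)}/x^{2ν})·(x²/(1−x²))·(x/y)^ν·U_ν(t) + (y^{2(ν+1)}/x^{2ν})·∑_{m=0}^{ν} (x/y)^m·U_m(t) ] } = (1 − 2t·xy + x²y²)·(1−x²)⁻¹·U_ν(t). -/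
open Finset

private lemma cheb_rec (t : ℂ) (n : ℕ) :
    (Polynomial.Chebyshev.U ℂ ((n : ℤ) + 2)).eval t
      = 2 * t * (Polynomial.Chebyshev.U ℂ ((n : ℤ) + 1)).eval t
        - (Polynomial.Chebyshev.U ℂ (n : ℤ)).eval t := by
  rw [Polynomial.Chebyshev.U_add_two]
  simp [Polynomial.eval_mul, Polynomial.eval_sub]

private lemma lemL (t z : ℂ) : ∀ n : ℕ,
    (1 - 2 * t * z + z ^ 2) *
        ∑ m ∈ Finset.range (n + 1), z ^ m * (Polynomial.Chebyshev.U ℂ (m : ℤ)).eval t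
      = 1 - z ^ (n + 1) * (Polynomial.Chebyshev.U ℂ ((n : ℤ) + 1)).eval t
          + z ^ (n + 2) * (Polynomial.Chebyshev.U ℂ (n : ℤ)).eval t := by
  intro n
  induction n with
  | zero =>
      simp [Polynomial.Chebyshev.U_zero, Polynomial.Chebyshev.U_one]
      ring
  | succ n ih =>
      rw [Finset.sum_range_succ, mul_add, ih]
      have h2 : (((n + 1 : ℕ) : ℤ)) = (n : ℤ) + 1 := by push_cast; ring
      rw [h2, show ((n : ℤ) + 1 + 1) = (n : ℤ) + 2 by ring, cheb_rec]
      ring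

private lemma reidx (t x y : ℂ) : ∀ ν : ℕ,
    ∑ c ∈ Finset.Icc 1 ν, (y / x) ^ (c - 1) * (Polynomial.Chebyshev.U ℂ ((c : ℤ) - 1)).eval t
      = ∑ m ∈ Finset.range ν, (y / x) ^ m * (Polynomial.Chebyshev.U ℂ (m : ℤ)).eval t := by
  intro ν
  induction ν with
  | zero => simp
  | succ ν ih =>
      rw [Finset.sum_Icc_succ_top (by omega), Finset.sum_range_succ, ih,
        show (((ν + 1 : ℕ) : ℤ) - 1) = (ν : ℤ) by push_cast; ring,
        Nat.add_sub_cancel]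

private lemma lemG (t x y : ℂ) (hzw : (x / y) * (y / x) = 1) : ∀ ν : ℕ,
    (1 - 2 * t * (x / y) + (x / y) ^ 2) *
        ∑ c ∈ Finset.Icc 1 ν, (y / x) ^ (2 * c) *
          ∑ m ∈ Finset.range c, (x / y) ^ m * (Polynomial.Chebyshev.U ℂ (m : ℤ)).eval t
      = (∑ c ∈ Finset.Icc 1 ν, (y / x) ^ (2 * c)) + 1
          - (y / x) ^ ν * (Polynomial.Chebyshev.U ℂ (ν : ℤ)).eval t := by
  have hzwn : ∀ k : ℕ, (x / y) ^ k * (y / x) ^ k = 1 := fun k => by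
    rw [← mul_pow, hzw, one_pow]
  intro ν
  induction ν with
  | zero => simp [Polynomial.Chebyshev.U_zero]
  | succ ν ih =>
      rw [Finset.sum_Icc_succ_top (by omega), Finset.sum_Icc_succ_top (by omega),
        mul_add, ih, show (((ν + 1 : ℕ) : ℤ)) = (ν : ℤ) + 1 by push_cast; ring]
      have hL := lemL t (x / y) ν
      linear_combination ((y / x) ^ (2 * (ν + 1))) * hL
        + ((y / x) ^ ν * (Polynomial.Chebyshev.U ℂ (ν : ℤ)).eval t * ((x / y) * (y / x))
            - (y / x) ^ (ν + 1) * (Polynomial.Chebyshev.U ℂ ((ν : ℤ) + 1)).eval t) * hzwn (ν + 1)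
        + ((y / x) ^ ν * (Polynomial.Chebyshev.U ℂ (ν : ℤ)).eval t) * hzw

private lemma final_step (t a b z w Zi J un un1 Z S1 Sn S3 S4 : ℂ)
    (hzw : z * w = 1) (hZ : Z * Zi = 1) (hJ : (1 - a) * J = 1) (hb : b * z ^ 2 = a)
    (hqSn : (1 - 2 * t * z + z ^ 2) * Sn
        = z ^ 2 * (1 - Zi * w * un1 + Zi * w ^ 2 * un) - (1 - 2 * t * z + z ^ 2) * (Zi * un))
    (hG : (1 - 2 * t * z + z ^ 2) * S3 = S1 + 1 - Zi * un)
    (hL4 : (1 - 2 * t * z + z ^ 2) * S4 = 1 - Z * z * un1 + Z * z ^ 2 * un) :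
    Z * (1 + (1 - a) * S1 - b * Zi ^ 2)
      + Z * (-b) * ((1 - 2 * t * z + z ^ 2) * Sn)
      + Z * (-(1 - a)) * ((1 - 2 * t * z + z ^ 2) * S3)
      + Z * (b * Zi ^ 2 * (a * J) * Z * un) * (1 - 2 * t * z + z ^ 2)
      + Z * (b * Zi ^ 2) * ((1 - 2 * t * z + z ^ 2) * S4)
      = (1 - 2 * t * (b * z) + a * b) * J * un := by
  linear_combination (-(Z * b)) * hqSn + (-(Z * (1 - a))) * hG + (Z * b * Zi ^ 2) * hL4
    + (-(b * Zi * un * Z) + b * z * Zi * un1 * Z - b * z * w * Zi * un * Z) * hzw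
    + (un - b * z * Zi * un1 * Z + 2 * b * z ^ 2 * un + b * z ^ 2 * Zi * un * Z - a * un
        + a * b * J * un + a * b * Zi * J * un * Z + a * b * z ^ 2 * J * un
        + a * b * z ^ 2 * Zi * J * un * Z - 2 * t * b * z * un - 2 * t * a * b * z * J * un
        - 2 * t * a * b * z * Zi * J * un * Z) * hZ
    + (-un - b * z ^ 2 * un + 2 * t * b * z * un) * hJ
    + (-Z + un + J * un) * hb

set_option maxHeartbeats 1000000 in
/-- The key identity \eqref{th1}: for complex `t`, nonzero complex
`x, y` with `x² ≠ 1` and any `ν : ℕ`,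
`(x/y)^ν { [1 + (1−x²)∑_{c=1}^ν (y/x)^{2c} − y^{2(ν+1)}/x^{2ν}]
  + (1 − 2t(x/y) + (x/y)²)[ −y² ∑_{c=1}^ν (y/x)^{c−1} U_{c−1}(t)
    − (1−x²) ∑_{c=1}^ν (y/x)^{2c} ∑_{m=0}^{c−1} (x/y)^m U_m(t)
    + (y^{2(ν+1)}/x^{2ν})(x²/(1−x²))(x/y)^ν U_ν(t)
    + (y^{2(ν+1)}/x^{2ν}) ∑_{m=0}^ν (x/y)^m U_m(t) ] }
 = (1 − 2txy + x²y²)(1−x²)⁻¹ U_ν(t)`,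
where `U_m` is the Chebyshev polynomial of the second kind. -/
theorem one_swap_identity (t x y : ℂ) (hx : x ≠ 0) (hy : y ≠ 0) (hx1 : x ^ 2 ≠ 1)
    (ν : ℕ) :
    (x / y) ^ ν *
      ((1 + (1 - x ^ 2) * (∑ c ∈ Finset.Icc 1 ν, (y / x) ^ (2 * c))
          - y ^ (2 * (ν + 1)) / x ^ (2 * ν))
        + (1 - 2 * t * (x / y) + (x / y) ^ 2) *
          (-y ^ 2 * (∑ c ∈ Finset.Icc 1 ν,
              (y / x) ^ (c - 1) * (Polynomial.Chebyshev.U ℂ (c - 1)).eval t)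
            - (1 - x ^ 2) * (∑ c ∈ Finset.Icc 1 ν, (y / x) ^ (2 * c) *
                ∑ m ∈ Finset.range c, (x / y) ^ m * (Polynomial.Chebyshev.U ℂ m).eval t)
            + (y ^ (2 * (ν + 1)) / x ^ (2 * ν)) * (x ^ 2 / (1 - x ^ 2)) *
                (x / y) ^ ν * (Polynomial.Chebyshev.U ℂ ν).eval t
            + (y ^ (2 * (ν + 1)) / x ^ (2 * ν)) *
                ∑ m ∈ Finset.range (ν + 1),
                  (x / y) ^ m * (Polynomial.Chebyshev.U ℂ m).eval t))
      = (1 - 2 * t * x * y + x ^ 2 * y ^ 2) * (1 - x ^ 2)⁻¹ *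
          (Polynomial.Chebyshev.U ℂ ν).eval t := by
  have hx2 : (1 : ℂ) - x ^ 2 ≠ 0 := sub_ne_zero.mpr (Ne.symm hx1)
  have hzw : (x / y) * (y / x) = 1 := by field_simp
  have hL4 := lemL t (x / y) ν
  have hLB := lemL t (y / x) ν
  rw [Finset.sum_range_succ] at hLB
  have hG := lemG t x y hzw ν
  rw [reidx t x y ν]
  have hD : y ^ (2 * (ν + 1)) / x ^ (2 * ν) = y ^ 2 * (((x / y) ^ ν)⁻¹) ^ 2 := by
    rw [← inv_pow, ← pow_mul, inv_div, div_pow,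
      show ν * 2 = 2 * ν from Nat.mul_comm _ _,
      show 2 * (ν + 1) = 2 * ν + 2 by ring, pow_add, mul_comm (y ^ (2 * ν)) (y ^ 2),
      mul_div_assoc]
  have hW : (y / x) ^ ν = ((x / y) ^ ν)⁻¹ := by rw [← inv_div, inv_pow]
  have pz1 : (x / y) ^ (ν + 1) = (x / y) ^ ν * (x / y) := pow_succ _ _
  have pz2 : (x / y) ^ (ν + 2) = (x / y) ^ ν * (x / y) ^ 2 := pow_add _ _ _
  have pw1 : (y / x) ^ (ν + 1) = (y / x) ^ ν * (y / x) := pow_succ _ _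
  have pw2 : (y / x) ^ (ν + 2) = (y / x) ^ ν * (y / x) ^ 2 := pow_add _ _ _
  rw [pz1, pz2] at hL4
  rw [pw1, pw2, hW] at hLB
  rw [hW] at hG
  rw [hD]
  set un := (Polynomial.Chebyshev.U ℂ (ν : ℤ)).eval t with hun
  set un1 := (Polynomial.Chebyshev.U ℂ ((ν : ℤ) + 1)).eval t with hun1
  set S1 := ∑ c ∈ Finset.Icc 1 ν, (y / x) ^ (2 * c) with hS1
  set Sn := ∑ m ∈ Finset.range ν, (y / x) ^ m * (Polynomial.Chebyshev.U ℂ (m : ℤ)).eval t with hSn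
  set S3 := ∑ c ∈ Finset.Icc 1 ν, (y / x) ^ (2 * c) *
      ∑ m ∈ Finset.range c, (x / y) ^ m * (Polynomial.Chebyshev.U ℂ (m : ℤ)).eval t with hS3
  set S4 := ∑ m ∈ Finset.range (ν + 1), (x / y) ^ m * (Polynomial.Chebyshev.U ℂ (m : ℤ)).eval t with hS4
  set Z := (x / y) ^ ν with hZdef
  have hZ0 : Z ≠ 0 := pow_ne_zero _ (div_ne_zero hx hy)
  have hq : (1 - 2 * t * (x / y) + (x / y) ^ 2)
      = (x / y) ^ 2 * (1 - 2 * t * (y / x) + (y / x) ^ 2) := by field_simp; ring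
  have hqSn : (1 - 2 * t * (x / y) + (x / y) ^ 2) * Sn
      = (x / y) ^ 2 * (1 - Z⁻¹ * (y / x) * un1 + Z⁻¹ * (y / x) ^ 2 * un)
        - (1 - 2 * t * (x / y) + (x / y) ^ 2) * (Z⁻¹ * un) := by
    rw [hq]; linear_combination (x / y) ^ 2 * hLB
  have hb : y ^ 2 * (x / y) ^ 2 = x ^ 2 := by field_simp
  have hxy : y ^ 2 * (x / y) = x * y := by field_simp
  have FS := final_step t (x ^ 2) (y ^ 2) (x / y) (y / x) Z⁻¹ (1 - x ^ 2)⁻¹ un un1 Z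
    S1 Sn S3 S4 hzw (mul_inv_cancel₀ hZ0) (mul_inv_cancel₀ hx2) hb hqSn hG hL4
  linear_combination FS + (-(2 * t * (1 - x ^ 2)⁻¹ * un)) * hxy
end

section
/- Let x, y be nonzero complex numbers with x² ≠ 1 and let ν ≥ 1 be an integer. Then (x/y)^ν · [ (1 + x²/y²)·A_{ν,ν} − (x/y)·A_{ν−1,ν} ] = (1 + x²y²)/(1 − x²). -/
/-- The diagonal coefficient `A_{ν,ν} = (y²/(1−x²))(y/x)^ν`. -/
noncomputable def AcoeffDiag (x y : ℂ) (ν : ℕ) : ℂ :=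
  (y ^ 2 / (1 - x ^ 2)) * (y / x) ^ ν

/-- For nonzero complex `x, y` with `x² ≠ 1` and an integer `ν ≥ 1`,
`(x/y)^ν [ (1 + x²/y²) A_{ν,ν} − (x/y) A_{ν−1,ν} ] = (1 + x²y²)/(1 − x²)`. -/
theorem coefficient_of_U_nu (x y : ℂ) (hx : x ≠ 0) (hy : y ≠ 0) (hx1 : x ^ 2 ≠ 1)
    (ν : ℕ) (hν : 1 ≤ ν) :
    (x / y) ^ ν * ((1 + x ^ 2 / y ^ 2) * AcoeffDiag x y ν
        - (x / y) * Acoeff x y ν (ν - 1))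
      = (1 + x ^ 2 * y ^ 2) / (1 - x ^ 2) := by
  obtain ⟨m, rfl⟩ := Nat.exists_eq_add_of_le hν
  have h1 : 1 - x ^ 2 ≠ 0 := sub_ne_zero.mpr (Ne.symm hx1)
  simp only [Acoeff, AcoeffDiag, Nat.add_sub_cancel, Finset.Icc_self,
    Finset.sum_singleton, Nat.add_comm 1 m]
  have h3 : (y / x) ^ (2 * (m + 1)) = ((y / x) ^ m) ^ 2 * (y / x) ^ 2 := by
    rw [show 2 * (m + 1) = m * 2 + 2 by ring, pow_add, pow_mul]
  have h2 : y ^ (2 * (m + 1 + 1)) / x ^ (2 * (m + 1))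
      = y ^ 2 * ((y / x) ^ m) ^ 2 * (y / x) ^ 2 := by
    rw [show 2 * (m + 1 + 1) = 2 * (m + 1) + 2 by ring, pow_add,
      mul_comm (y ^ (2 * (m + 1))) (y ^ 2), mul_div_assoc, ← div_pow, h3]
    ring
  rw [h2, h3, pow_succ (x / y) m, pow_succ (y / x) m]
  have hAB : (x / y) ^ m * (y / x) ^ m = 1 := by
    rw [← mul_pow, div_mul_div_comm, mul_comm x y, div_self
      (mul_ne_zero hy hx), one_pow]
  generalize hA : (x / y) ^ m = A at hAB ⊢
  generalize hB : (y / x) ^ m = B at hAB ⊢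
  have hA0 : A ≠ 0 := by
    rw [← hA]; exact pow_ne_zero _ (div_ne_zero hx hy)
  have hBA : B = A⁻¹ := eq_inv_of_mul_eq_one_left (by rw [mul_comm]; exact hAB)
  subst hBA
  have h5 : A * x * y ^ 3 - A * x ^ 3 * y ^ 3 ≠ 0 := by
    have e : A * x * y ^ 3 - A * x ^ 3 * y ^ 3 = A * x * y ^ 3 * (1 - x ^ 2) := by ring
    rw [e]
    exact mul_ne_zero (mul_ne_zero (mul_ne_zero hA0 hx) (pow_ne_zero _ hy)) h1
  clear hAB hA hB h2 h3 hν h5 hx1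
  rw [eq_div_iff h1]
  field_simp
  have hq : A ^ 2 * x ^ 2 ≠ 0 := mul_ne_zero (pow_ne_zero 2 hA0) (pow_ne_zero 2 hx)
  have hD1 : y * (A * (A ^ 2 * x ^ 2) * (A ^ 2 * x ^ 2)) ≠ 0 :=
    mul_ne_zero hy (mul_ne_zero (mul_ne_zero hA0 hq) hq)
  have hD2 : y * (y ^ 2 * ((1 - x ^ 2) * (A * x))) ≠ 0 :=
    mul_ne_zero hy (mul_ne_zero (pow_ne_zero 2 hy) (mul_ne_zero h1 (mul_ne_zero hA0 hx)))
  field_simp [hD1, hD2]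
  ring
end

section
/- Let x, y be nonzero complex numbers with x² ≠ 1 and let ν ≥ 2 be an integer. Then (x/y)^ν · [ (1 + x²/y²)·A_{ν−1,ν} − (x/y)·A_{ν,ν} − (x/y)·A_{ν−2,ν} ] = −xy/(1 − x²). -/
set_option maxHeartbeats 1000000


/-- For nonzero complex `x, y` with `x² ≠ 1` and an integer `ν ≥ 2`,
`(x/y)^ν [ (1 + x²/y²) A_{ν−1,ν} − (x/y) A_{ν,ν} − (x/y) A_{ν−2,ν} ] = −xy/(1 − x²)`. -/
theorem coefficient_of_U_nu_sub_one (x y : ℂ) (hx : x ≠ 0) (hy : y ≠ 0)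
    (hx1 : x ^ 2 ≠ 1) (ν : ℕ) (hν : 2 ≤ ν) :
    (x / y) ^ ν * ((1 + x ^ 2 / y ^ 2) * Acoeff x y ν (ν - 1)
        - (x / y) * AcoeffDiag x y ν - (x / y) * Acoeff x y ν (ν - 2))
      = -(x * y) / (1 - x ^ 2) := by
  obtain ⟨n, rfl⟩ : ∃ n, ν = n + 2 := ⟨ν - 2, by omega⟩
  have h1 : n + 2 - 1 = n + 1 := by omega
  have h2 : n + 2 - 2 = n := by omega
  have hx1' : (1 : ℂ) - x ^ 2 ≠ 0 := by
    intro h; apply hx1; linear_combination -h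
  have hst : (x / y) * (y / x) = 1 := by field_simp
  have hpow : ∀ k : ℕ, (x / y) ^ k * (y / x) ^ k = 1 := fun k => by
    rw [← mul_pow, hst, one_pow]
  have hyx : y ^ (2 * (n + 2 + 1)) / x ^ (2 * (n + 2))
      = y ^ 2 * (y / x) ^ (2 * (n + 2)) := by
    rw [div_pow, show 2 * (n + 2 + 1) = 2 + 2 * (n + 2) by ring, pow_add,
      mul_div_assoc]
  -- A_{ν-1} as (y/x)^(n+1) times an n-free constant
  have e1 : Acoeff x y (n + 2) (n + 1)
      = (y / x) ^ (n + 1) * (-y ^ 2 + (y ^ 2 - (1 - x ^ 2)) * (y / x) ^ 2) := by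
    rw [Acoeff, show n + 1 + 1 = n + 2 from rfl, Finset.Icc_self,
      Finset.sum_singleton, hyx,
      show 2 * (n + 2) = (n + 1) + (n + 1) + 2 by ring, pow_add, pow_add]
    have h := hpow (n + 1)
    linear_combination ((y ^ 2 - (1 - x ^ 2)) * (y / x) ^ (n + 1) * (y / x) ^ 2) * h
  -- A_{ν-2} as (y/x)^n times an n-free constant
  have e2 : Acoeff x y (n + 2) n
      = (y / x) ^ n * (-y ^ 2 - (1 - x ^ 2) * ((y / x) ^ 2 + (y / x) ^ 4)
          + y ^ 2 * (y / x) ^ 4) := by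
    have hs2 : Finset.Icc (n + 1) (n + 2) = {n + 1, n + 2} := by
      ext a; simp [Finset.mem_Icc]; omega
    rw [Acoeff, hs2, Finset.sum_pair (by omega : n + 1 ≠ n + 2), hyx,
      show 2 * (n + 1) = n + n + 2 by ring,
      show 2 * (n + 2) = n + n + 4 by ring, pow_add, pow_add, pow_add, pow_add]
    have h := hpow n
    linear_combination ((- (1 - x ^ 2) * ((y / x) ^ 2 + (y / x) ^ 4) + y ^ 2 * (y / x) ^ 4)
      * (y / x) ^ n) * h
  -- diagonal piece
  have hD : (x / y) ^ (n + 2) * ((x / y) * AcoeffDiag x y (n + 2))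
      = x * y / (1 - x ^ 2) := by
    rw [AcoeffDiag]
    have h := hpow (n + 2)
    have hc : (x / y) * (y ^ 2 / (1 - x ^ 2)) = x * y / (1 - x ^ 2) := by
      field_simp
    linear_combination ((x / y) * (y ^ 2 / (1 - x ^ 2))) * h + hc
  -- the two off-diagonal pieces cancel
  have hconst : (1 + x ^ 2 / y ^ 2) * ((y / x)
        * (-y ^ 2 + (y ^ 2 - (1 - x ^ 2)) * (y / x) ^ 2))
      = (x / y) * (-y ^ 2 - (1 - x ^ 2) * ((y / x) ^ 2 + (y / x) ^ 4)
          + y ^ 2 * (y / x) ^ 4) := by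
    have hu : x * x⁻¹ = 1 := mul_inv_cancel₀ hx
    have hv : y * y⁻¹ = 1 := mul_inv_cancel₀ hy
    linear_combination
      (-(x * y ^ 2 * y⁻¹) + x⁻¹ * y ^ 3
        + x⁻¹ * y⁻¹ * (y ^ 2 - y ^ 4 - x ^ 2 * y ^ 2)
        + x⁻¹ * y⁻¹ ^ 2 * (-y ^ 3 + y ^ 5 + x ^ 2 * y ^ 3)
        + x⁻¹ ^ 2 * x * y ^ 3 - x⁻¹ ^ 2 * y⁻¹ * x * y ^ 4
        + x⁻¹ ^ 2 * y⁻¹ ^ 2 * x * (-y ^ 3 + y ^ 5 + x ^ 2 * y ^ 3)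
        + x⁻¹ ^ 3 * y⁻¹ * (y ^ 4 - y ^ 6 - x ^ 2 * y ^ 4)) * hu
      + (x⁻¹ * y⁻¹ * (-y ^ 2 + y ^ 4) + x⁻¹ ^ 3 * (y ^ 3 - y ^ 5)) * hv
  have hE : (1 + x ^ 2 / y ^ 2) * Acoeff x y (n + 2) (n + 1)
      = (x / y) * Acoeff x y (n + 2) n := by
    rw [e1, e2, pow_succ]
    linear_combination (y / x) ^ n * hconst
  rw [h1, h2]
  linear_combination (x / y) ^ (n + 2) * hE - hD
end

section
/- Let x, y be nonzero complex numbers and let ν ≥ 2 be an integer. Then (x/y)^ν · [ A_ν + (1 + x²/y²)·A_{0,ν} − (x/y)·A_{1,ν} ] = 0. -/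
/-- The coefficient `A_ν = 1 + (1−x²) ∑_{c=1}^ν (y/x)^{2c} − y^{2(ν+1)}/x^{2ν}`. -/
noncomputable def Abig (x y : ℂ) (ν : ℕ) : ℂ :=
  1 + (1 - x ^ 2) * (∑ c ∈ Finset.Icc 1 ν, (y / x) ^ (2 * c))
    - y ^ (2 * (ν + 1)) / x ^ (2 * ν)

/-- For nonzero complex `x, y` and an integer `ν ≥ 2`,
`(x/y)^ν [ A_ν + (1 + x²/y²) A_{0,ν} − (x/y) A_{1,ν} ] = 0`. -/
theorem constant_term_vanishes (x y : ℂ) (hx : x ≠ 0) (hy : y ≠ 0)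
    (ν : ℕ) (hν : 2 ≤ ν) :
    (x / y) ^ ν * (Abig x y ν + (1 + x ^ 2 / y ^ 2) * Acoeff x y ν 0
        - (x / y) * Acoeff x y ν 1) = 0 := by
  have hsplit : Finset.Icc 1 ν = insert 1 (Finset.Icc 2 ν) := by
    ext c
    simp only [Finset.mem_insert, Finset.mem_Icc]
    omega
  have hnotmem : 1 ∉ Finset.Icc 2 ν := by simp
  unfold Abig Acoeff
  rw [hsplit, Finset.sum_insert hnotmem]
  set S : ℂ := ∑ c ∈ Finset.Icc 2 ν, (y / x) ^ (2 * c) with hS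
  set Y : ℂ := y ^ (2 * (ν + 1)) / x ^ (2 * ν) with hY
  field_simp
  ring_nf
  have hx2 : x ^ 2 * x⁻¹ ^ 2 = 1 := by field_simp
  linear_combination (x ^ ν * y ^ 2 * y⁻¹ ^ ν * (x ^ 2 - 1)) * hx2
end
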